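/- Define Φ_C(x) := ∏_{ℓ=1}^∞ (1 + (x−1)/ℓ) e^{−(x−1)/ℓ} and φ_k(x) := ∏_{ℓ=1}^k (1 + (x−1)/ℓ) e^{−(x−1)/ℓ} for x ≥ 0. Then there exists a constant C > 0 such that for all k ≥ 1, sup_{x ∈ ℝ₊} |φ_k(x) − Φ_C(x)| ≤ C/√k; i.e. sup_{ℝ₊} |φ_k − Φ_C| = O(1/√k) as k → ∞. -/

import Mathlib

open Finset

/-! Auxiliary lemmas -/

lemma aux_factor_nonneg {u : ℝ} (hu : -1 ≤ u) : 0 ≤ (1 + u) * Real.exp (-u) :=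
  mul_nonneg (by linarith) (Real.exp_pos _).le

lemma aux_factor_le_one (u : ℝ) : (1 + u) * Real.exp (-u) ≤ 1 := by
  have h := Real.add_one_le_exp u
  calc (1 + u) * Real.exp (-u) ≤ Real.exp u * Real.exp (-u) :=
        mul_le_mul_of_nonneg_right (by linarith) (Real.exp_pos _).le
    _ = 1 := by rw [← Real.exp_add]; simp

lemma aux_one_sub_sq_le {u : ℝ} (hu : -1 ≤ u) : 1 - u ^ 2 ≤ (1 + u) * Real.exp (-u) := by
  have h : 1 - u ≤ Real.exp (-u) := by have := Real.add_one_le_exp (-u); linarith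
  nlinarith [mul_le_mul_of_nonneg_left h (by linarith : (0:ℝ) ≤ 1 + u)]

/-- Weierstrass product inequality. -/
lemma aux_weier (s : Finset ℕ) (f : ℕ → ℝ) (h0 : ∀ i, 0 ≤ f i) (h1 : ∀ i, f i ≤ 1) :
    1 - ∑ i ∈ s, (1 - f i) ≤ ∏ i ∈ s, f i := by
  induction s using Finset.cons_induction with
  | empty => simp
  | cons a s ha ih =>
    rw [Finset.prod_cons, Finset.sum_cons]
    have hP0 : 0 ≤ ∏ i ∈ s, f i := Finset.prod_nonneg fun i _ => h0 i
    have hS0 : 0 ≤ ∑ i ∈ s, (1 - f i) :=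
      Finset.sum_nonneg fun i _ => by have := h1 i; linarith
    nlinarith [h0 a, h1 a, ih]

lemma aux_multipliable (f : ℕ → ℝ) (h0 : ∀ i, 0 ≤ f i) (h1 : ∀ i, f i ≤ 1) :
    Multipliable f := by
  have hanti : Antitone (fun s : Finset ℕ => ∏ i ∈ s, f i) := by
    intro s t hst
    simp only
    rw [← Finset.prod_sdiff hst]
    have h1' : ∏ i ∈ t \ s, f i ≤ 1 :=
      Finset.prod_le_one (fun i _ => h0 i) (fun i _ => h1 i)
    have h0' : 0 ≤ ∏ i ∈ s, f i := Finset.prod_nonneg fun i _ => h0 i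
    nlinarith [Finset.prod_nonneg (fun i (_ : i ∈ t \ s) => h0 i)]
  have hbdd : BddBelow (Set.range fun s : Finset ℕ => ∏ i ∈ s, f i) := by
    refine ⟨0, ?_⟩
    rintro _ ⟨s, rfl⟩
    exact Finset.prod_nonneg fun i _ => h0 i
  exact ⟨_, tendsto_atTop_ciInf hanti hbdd⟩

lemma aux_sum_inv_sq (k : ℕ) (hk : 1 ≤ k) :
    ∀ m : ℕ, ∑ j ∈ Finset.Ico k m, (1 : ℝ) / ((j : ℝ) + 1) ^ 2 ≤ 1 / (k : ℝ) := by
  have hk' : (1:ℝ) ≤ (k:ℝ) := by exact_mod_cast hk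
  have key : ∀ m : ℕ, k ≤ m →
      ∑ j ∈ Finset.Ico k m, (1 : ℝ) / ((j : ℝ) + 1) ^ 2 ≤ 1 / (k : ℝ) - 1 / (m : ℝ) := by
    intro m hm
    induction m with
    | zero => omega
    | succ m ih =>
      rcases Nat.lt_or_ge k (m + 1) with h | h
      · have hkm : k ≤ m := by omega
        have hm1 : (1:ℝ) ≤ (m:ℝ) := le_trans hk' (by exact_mod_cast hkm)
        rw [Finset.sum_Ico_succ_top hkm]
        have h2 : (1:ℝ) / ((m:ℝ) + 1) ^ 2 ≤ 1 / (m:ℝ) - 1 / ((m:ℝ) + 1) := by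
          rw [div_sub_div _ _ (by linarith) (by linarith), div_le_div_iff₀ (by positivity) (by positivity)]
          ring_nf
          nlinarith
        have := ih hkm
        push_cast
        linarith
      · have : k = m + 1 := by omega
        subst this
        simp
  intro m
  rcases Nat.lt_or_ge m k with h | h
  · rw [Finset.Ico_eq_empty (by omega)]
    simp
  · have := key m h
    have hm : (0:ℝ) < (m:ℝ) := by
      have : 1 ≤ m := le_trans hk h
      exact_mod_cast Nat.lt_of_lt_of_le Nat.zero_lt_one this
    have : (0:ℝ) ≤ 1 / (m:ℝ) := by positivity
    linarith


lemma aux_exp_tail {t : ℝ} (ht1 : 1 < t) : (1 + t) * Real.exp (-t) ≤ 48 / t ^ 2 := by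
  have ht0 : 0 < t := by linarith
  have hexp : t ^ 4 / 24 ≤ Real.exp t := by
    have h5 := Real.sum_le_exp_of_nonneg ht0.le 5
    norm_num [Finset.sum_range_succ, Nat.factorial] at h5
    linarith [sq_nonneg t, pow_nonneg ht0.le 3]
  have ht2pos : (0:ℝ) < t ^ 2 := pow_pos ht0 2
  have hpoly : (0:ℝ) ≤ (2 * t + 1) * (t - 1) := mul_nonneg (by linarith) (by linarith)
  rw [Real.exp_neg, ← div_eq_mul_inv, div_le_div_iff₀ (Real.exp_pos t) ht2pos]
  nlinarith [hexp, mul_nonneg (sq_nonneg t) hpoly]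

/-- The `k`-th partial product `φ_k(x) = ∏_{ℓ=1}^k (1 + (x-1)/ℓ) e^{-(x-1)/ℓ}` of `Φ_C`. -/
noncomputable def phiCpartial (k : ℕ) (x : ℝ) : ℝ :=
  ∏ ℓ ∈ Finset.Icc 1 k, (1 + (x - 1) / ℓ) * Real.exp (-((x - 1) / ℓ))

/-- The infinite product `Φ_C(x) = ∏_{ℓ=1}^∞ (1 + (x-1)/ℓ) e^{-(x-1)/ℓ}`. -/
noncomputable def PhiC (x : ℝ) : ℝ :=
  ∏' ℓ : ℕ, (1 + (x - 1) / ((ℓ : ℝ) + 1)) * Real.exp (-((x - 1) / ((ℓ : ℝ) + 1)))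

set_option maxHeartbeats 2000000 in
/-- There is a constant `C > 0` such that for all `k ≥ 1`,
`sup_{x ∈ ℝ₊} |φ_k(x) - Φ_C(x)| ≤ C/√k`, i.e. `sup_{ℝ₊} |φ_k - Φ_C| = O(1/√k)`. -/
theorem phiCpartial_tendsto_PhiC_rate :
    ∃ C : ℝ, 0 < C ∧ ∀ k : ℕ, 1 ≤ k → ∀ x : ℝ, 0 ≤ x →
      |phiCpartial k x - PhiC x| ≤ C / Real.sqrt k := by
  refine ⟨48, by norm_num, ?_⟩
  intro k hk x hx
  obtain ⟨t, ht⟩ : ∃ t : ℝ, t = x - 1 := ⟨_, rfl⟩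
  have htm : (-1:ℝ) ≤ t := by rw [ht]; linarith
  obtain ⟨f, hf⟩ : ∃ f : ℕ → ℝ,
      f = fun j : ℕ => (1 + t / ((j : ℝ) + 1)) * Real.exp (-(t / ((j : ℝ) + 1))) := ⟨_, rfl⟩
  have hu : ∀ j : ℕ, -1 ≤ t / ((j : ℝ) + 1) := by
    intro j
    have hden : (0:ℝ) < (j:ℝ) + 1 := by positivity
    rw [le_div_iff₀ hden]
    nlinarith [Nat.cast_nonneg (α := ℝ) j]
  have h0 : ∀ j, 0 ≤ f j := fun j => by rw [hf]; exact aux_factor_nonneg (hu j)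
  have h1 : ∀ j, f j ≤ 1 := fun j => by rw [hf]; exact aux_factor_le_one _
  have hmul : Multipliable f := aux_multipliable f h0 h1
  have hPhi : PhiC x = ∏' j, f j := by rw [PhiC, hf, ht]
  have hpart : ∀ m : ℕ, phiCpartial m x = ∏ j ∈ Finset.range m, f j := by
    intro m
    rw [phiCpartial, hf, ht]
    rw [show Finset.Icc 1 m = Finset.Ico 1 (m+1) by rw [Finset.Ico_add_one_right_eq_Icc]]
    rw [Finset.prod_Ico_eq_prod_range]
    simp only [Nat.add_sub_cancel]
    refine Finset.prod_congr rfl fun j _ => ?_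
    have h1j : ((1 + j : ℕ) : ℝ) = (j : ℝ) + 1 := by push_cast; ring
    rw [h1j]
  have hT : Filter.Tendsto (fun m => ∏ j ∈ Finset.range m, f j) Filter.atTop (nhds (PhiC x)) := by
    rw [hPhi]
    exact hmul.hasProd.tendsto_prod_nat
  obtain ⟨P, hP⟩ : ∃ P : ℝ, P = phiCpartial k x := ⟨_, rfl⟩
  rw [← hP]
  have hP0 : 0 ≤ P := by
    rw [hP, hpart]; exact Finset.prod_nonneg fun i _ => h0 i
  have hP1 : P ≤ 1 := by
    rw [hP, hpart]; exact Finset.prod_le_one (fun i _ => h0 i) (fun i _ => h1 i)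
  -- key sandwich for partial products
  have key : ∀ m : ℕ, k ≤ m →
      P - P * (t ^ 2 / (k:ℝ)) ≤ ∏ j ∈ Finset.range m, f j ∧
        ∏ j ∈ Finset.range m, f j ≤ P := by
    intro m hm
    have hsplit : (∏ j ∈ Finset.range m, f j)
        = P * ∏ j ∈ Finset.Ico k m, f j := by
      rw [hP, hpart, ← Finset.prod_range_mul_prod_Ico f hm]
    have hQ0 : 0 ≤ ∏ j ∈ Finset.Ico k m, f j := Finset.prod_nonneg fun i _ => h0 i
    have hQ1 : ∏ j ∈ Finset.Ico k m, f j ≤ 1 :=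
      Finset.prod_le_one (fun i _ => h0 i) (fun i _ => h1 i)
    have hQlb : 1 - t ^ 2 / (k:ℝ) ≤ ∏ j ∈ Finset.Ico k m, f j := by
      have hw := aux_weier (Finset.Ico k m) f h0 h1
      have hsum : ∑ j ∈ Finset.Ico k m, (1 - f j) ≤ t ^ 2 / (k:ℝ) := by
        have hterm : ∀ j ∈ Finset.Ico k m, (1 - f j) ≤ t ^ 2 * (1 / ((j:ℝ)+1) ^ 2) := by
          intro j _
          have := aux_one_sub_sq_le (hu j)
          have hsq : (t / ((j:ℝ)+1)) ^ 2 = t ^ 2 * (1 / ((j:ℝ)+1) ^ 2) := by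
            field_simp
          rw [hf]
          simp only
          nlinarith [this]
        calc ∑ j ∈ Finset.Ico k m, (1 - f j)
            ≤ ∑ j ∈ Finset.Ico k m, t ^ 2 * (1 / ((j:ℝ)+1) ^ 2) :=
              Finset.sum_le_sum hterm
          _ = t ^ 2 * ∑ j ∈ Finset.Ico k m, (1 / ((j:ℝ)+1) ^ 2) := by
              rw [Finset.mul_sum]
          _ ≤ t ^ 2 * (1 / (k:ℝ)) := by
              have := aux_sum_inv_sq k hk m
              nlinarith [sq_nonneg t]
          _ = t ^ 2 / (k:ℝ) := by ring
      linarith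
    constructor
    · rw [hsplit]
      nlinarith
    · rw [hsplit]
      nlinarith
  have hPhiLeP : PhiC x ≤ P :=
    le_of_tendsto hT (Filter.eventually_atTop.2 ⟨k, fun m hm => (key m hm).2⟩)
  have hPhiLb : P - P * (t ^ 2 / (k:ℝ)) ≤ PhiC x :=
    ge_of_tendsto hT (Filter.eventually_atTop.2 ⟨k, fun m hm => (key m hm).1⟩)
  have hPhi0 : 0 ≤ PhiC x :=
    ge_of_tendsto hT (Filter.eventually_atTop.2
      ⟨0, fun m _ => Finset.prod_nonneg fun i _ => h0 i⟩)
  have habs : |P - PhiC x| = P - PhiC x := abs_of_nonneg (by linarith)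
  clear key hT hmul hPhi hu
  have hk1 : (1:ℝ) ≤ (k:ℝ) := by exact_mod_cast hk
  have hsk : (0:ℝ) < Real.sqrt k := Real.sqrt_pos.2 (by linarith)
  have hsk1 : (1:ℝ) ≤ Real.sqrt k := by
    rw [show (1:ℝ) = Real.sqrt 1 by simp]
    exact Real.sqrt_le_sqrt hk1
  have hsq : Real.sqrt k * Real.sqrt k = (k:ℝ) :=
    Real.mul_self_sqrt (by linarith)
  rw [habs]
  rcases le_or_gt (t ^ 2) (Real.sqrt k) with hcase | hcase
  · -- small t
    have h2 : P - PhiC x ≤ t ^ 2 / (k:ℝ) := by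
      have : P * (t ^ 2 / (k:ℝ)) ≤ 1 * (t ^ 2 / (k:ℝ)) := by
        apply mul_le_mul_of_nonneg_right hP1
        positivity
      linarith
    have h3 : t ^ 2 / (k:ℝ) ≤ 1 / Real.sqrt k := by
      rw [div_le_div_iff₀ (by linarith : (0:ℝ) < (k:ℝ)) hsk]
      nlinarith [hsk.le]
    have h4 : (1:ℝ) / Real.sqrt k ≤ 48 / Real.sqrt k := by
      rw [div_le_div_iff₀ hsk hsk]
      nlinarith
    linarith
  · -- large t
    have ht2 : 1 < t ^ 2 := lt_of_le_of_lt hsk1 hcase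
    have ht0 : 0 < t := by nlinarith
    have ht1 : 1 < t := by nlinarith
    have hPf0 : P ≤ f 0 := by
      rw [hP, hpart, ← Finset.prod_range_mul_prod_Ico f hk]
      have hQ1 : ∏ j ∈ Finset.Ico 1 k, f j ≤ 1 :=
        Finset.prod_le_one (fun i _ => h0 i) (fun i _ => h1 i)
      have hQ0 : 0 ≤ ∏ j ∈ Finset.Ico 1 k, f j := Finset.prod_nonneg fun i _ => h0 i
      simp only [Finset.prod_range_one]
      nlinarith [h0 0]
    have hf0 : f 0 = (1 + t) * Real.exp (-t) := by
      simp [hf]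
    have ht2pos : (0:ℝ) < t ^ 2 := pow_pos ht0 2
    have hbound : (1 + t) * Real.exp (-t) ≤ 48 / t ^ 2 := aux_exp_tail ht1
    have hlast : 48 / t ^ 2 ≤ 48 / Real.sqrt k := by
      rw [div_le_div_iff₀ ht2pos hsk]
      linarith [hcase]
    calc P - PhiC x ≤ P := by linarith
      _ ≤ f 0 := hPf0
      _ = (1 + t) * Real.exp (-t) := hf0
      _ ≤ 48 / t ^ 2 := hbound
      _ ≤ 48 / Real.sqrt k := hlast
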